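/- Let T > 0, let X : [0,T] → [0,∞) be continuous with X² differentiable on [0,T], let B ≥ 0 be a constant, and let A : [0,T] → [0,∞) be a measurable, integrable function such that (1/2)(X²)′(t) + B X²(t) ≤ A(t) X(t) for almost every t ∈ [0,T]. Then for all t ∈ [0,T] one has X(t) + B ∫₀ᵗ X(τ) dτ ≤ X(0) + ∫₀ᵗ A(τ) dτ. -/

import Mathlib

open MeasureTheory Set

lemma key_eps (T : ℝ) (hT : 0 < T) (X A D : ℝ → ℝ)
    (hXcont : ContinuousOn X (Icc 0 T))
    (hXnonneg : ∀ t ∈ Icc (0 : ℝ) T, 0 ≤ X t)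
    (hXder : ∀ t ∈ Icc (0 : ℝ) T,
      HasDerivWithinAt (fun s => X s ^ 2) (D t) (Icc 0 T) t)
    (B : ℝ) (hB : 0 ≤ B)
    (hAint : IntegrableOn A (Icc 0 T))
    (hAnonneg : ∀ t ∈ Icc (0 : ℝ) T, 0 ≤ A t)
    (hineq : ∀ᵐ t ∂(volume.restrict (Icc (0 : ℝ) T)),
      (1 / 2) * D t + B * X t ^ 2 ≤ A t * X t)
    (ε : ℝ) (hε : 0 < ε) :
    ∀ t ∈ Icc (0 : ℝ) T,
      X t + B * ∫ τ in (0 : ℝ)..t, X τ ≤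
        X 0 + (∫ τ in (0 : ℝ)..t, A τ) + Real.sqrt ε * (1 + B * T) := by
  set Y : ℝ → ℝ := fun s => Real.sqrt (X s ^ 2 + ε) with hYdef
  have hYpos : ∀ s, 0 < Y s := fun s => Real.sqrt_pos.2 (by positivity)
  have hXleY : ∀ s ∈ Icc (0:ℝ) T, X s ≤ Y s := by
    intro s hs
    have := Real.sqrt_le_sqrt (le_add_of_nonneg_right hε.le : X s ^ 2 ≤ X s ^ 2 + ε)
    rwa [Real.sqrt_sq (hXnonneg s hs)] at this
  have hYleX : ∀ s ∈ Icc (0:ℝ) T, Y s ≤ X s + Real.sqrt ε := by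
    intro s hs
    have h1 : X s ^ 2 + ε ≤ (X s + Real.sqrt ε) ^ 2 := by
      have := Real.sq_sqrt hε.le
      nlinarith [hXnonneg s hs, Real.sqrt_nonneg ε]
    calc Y s ≤ Real.sqrt ((X s + Real.sqrt ε)^2) := Real.sqrt_le_sqrt h1
      _ = X s + Real.sqrt ε := Real.sqrt_sq (add_nonneg (hXnonneg s hs) (Real.sqrt_nonneg ε))
  set g' : ℝ → ℝ := fun s => D s / (2 * Y s) with hg'def
  have hYderiv : ∀ s ∈ Ioo (0:ℝ) T, HasDerivAt Y (g' s) s := by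
    intro s hs
    have hmem : Icc (0:ℝ) T ∈ nhds s := Icc_mem_nhds hs.1 hs.2
    have hX2 : HasDerivAt (fun u => X u ^ 2) (D s) s :=
      (hXder s (Ioo_subset_Icc_self hs)).hasDerivAt hmem
    have hX2e : HasDerivAt (fun u => X u ^ 2 + ε) (D s) s := hX2.add_const ε
    have hne : X s ^ 2 + ε ≠ 0 := by positivity
    have h3 := (Real.hasDerivAt_sqrt hne).comp s hX2e
    have heq : D s / (2 * Y s) = 1 / (2 * Real.sqrt (X s ^ 2 + ε)) * D s := by
      rw [hYdef]; ring
    rw [hg'def]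
    simp only [heq]
    exact h3
  set φ : ℝ → ℝ := fun s => A s - B * X s + B * Real.sqrt ε with hφdef
  have hg'leφ : ∀ᵐ s ∂(volume.restrict (Icc (0:ℝ) T)), g' s ≤ φ s := by
    filter_upwards [hineq, ae_restrict_mem measurableSet_Icc] with s h hs
    have hY := hYpos s
    have h1 := hXleY s hs
    have h2 := hYleX s hs
    have hX := hXnonneg s hs
    have hA := hAnonneg s hs
    rw [hg'def, div_le_iff₀ (by positivity)]
    show D s ≤ (A s - B * X s + B * Real.sqrt ε) * (2 * Y s)
    have hsq := Real.sqrt_nonneg ε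
    nlinarith [mul_nonneg hA (sub_nonneg.2 h1),
      mul_nonneg hB (mul_nonneg hX (by linarith : (0:ℝ) ≤ X s + Real.sqrt ε - Y s)),
      mul_nonneg (mul_nonneg hB hsq) (sub_nonneg.2 h1)]
  have hXint : IntegrableOn X (Icc 0 T) := hXcont.integrableOn_compact isCompact_Icc
  have hφint : IntegrableOn φ (Icc 0 T) := by
    apply Integrable.add (hAint.sub (hXint.const_mul B))
    exact integrableOn_const (by simp [hT.le]) enorm_ne_top
  set ψ : ℝ → ℝ := fun s => max (φ s) (g' s) with hψdef
  have hψeq : ψ =ᵐ[volume.restrict (Icc (0:ℝ) T)] φ := by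
    filter_upwards [hg'leφ] with s h
    simp [hψdef, max_eq_left h]
  have hψint : IntegrableOn ψ (Icc 0 T) := hφint.congr hψeq.symm
  have hYcont : ContinuousOn Y (Icc 0 T) := by
    apply Real.continuous_sqrt.comp_continuousOn
    exact (hXcont.pow 2).add continuousOn_const
  intro t ht
  have hFTC : Y t - Y 0 ≤ ∫ s in (0:ℝ)..t, ψ s := by
    apply intervalIntegral.sub_le_integral_of_hasDeriv_right_of_le ht.1
      (hYcont.mono (Icc_subset_Icc le_rfl ht.2))
      (fun x hx => ((hYderiv x ⟨hx.1, hx.2.trans_le ht.2⟩).hasDerivWithinAt))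
      (hψint.mono_set (Icc_subset_Icc le_rfl ht.2))
    intro x hx
    exact le_max_right _ _
  have hsub : uIcc (0:ℝ) t ⊆ Icc 0 T := by
    rw [uIcc_of_le ht.1]; exact Icc_subset_Icc le_rfl ht.2
  have hψφt : ∫ s in (0:ℝ)..t, ψ s = ∫ s in (0:ℝ)..t, φ s := by
    apply intervalIntegral.integral_congr_ae
    have h2 : ∀ᵐ s ∂(volume.restrict (uIoc (0:ℝ) t)), ψ s = φ s :=
      ae_restrict_of_ae_restrict_of_subset (uIoc_subset_uIcc.trans hsub) hψeq
    filter_upwards [(ae_restrict_iff' measurableSet_uIoc).1 h2] with s h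
    exact h
  have hAi : IntervalIntegrable A volume 0 t := (hAint.mono_set hsub).intervalIntegrable
  have hXi : IntervalIntegrable X volume 0 t := (hXint.mono_set hsub).intervalIntegrable
  have hφsplit : ∫ s in (0:ℝ)..t, φ s
      = (∫ s in (0:ℝ)..t, A s) - B * (∫ s in (0:ℝ)..t, X s) + B * Real.sqrt ε * t := by
    simp only [hφdef]
    rw [intervalIntegral.integral_add ((hAi.sub (hXi.const_mul B))) intervalIntegrable_const,
      intervalIntegral.integral_sub hAi (hXi.const_mul B),
      intervalIntegral.integral_const_mul, intervalIntegral.integral_const, smul_eq_mul]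
    ring
  have hXt := hXleY t ht
  have hY0 := hYleX 0 (left_mem_Icc.2 hT.le)
  have hsq := Real.sqrt_nonneg ε
  have hBt : B * Real.sqrt ε * t ≤ B * Real.sqrt ε * T :=
    mul_le_mul_of_nonneg_left ht.2 (by positivity)
  nlinarith [hFTC, hψφt, hφsplit]

/-- Lemma "SimpliCarre": if `X ≥ 0` is continuous on `[0,T]`, `X²` is differentiable there
with derivative `D`, and `(1/2) D + B X² ≤ A X` a.e. on `[0,T]` for some `B ≥ 0` and a
nonnegative measurable integrable `A`, then
`X t + B ∫₀ᵗ X ≤ X 0 + ∫₀ᵗ A` for all `t ∈ [0,T]`. -/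
theorem stmt2 (T : ℝ) (hT : 0 < T) (X A D : ℝ → ℝ)
    (hXcont : ContinuousOn X (Icc 0 T))
    (hXnonneg : ∀ t ∈ Icc (0 : ℝ) T, 0 ≤ X t)
    (hXder : ∀ t ∈ Icc (0 : ℝ) T,
      HasDerivWithinAt (fun s => X s ^ 2) (D t) (Icc 0 T) t)
    (B : ℝ) (hB : 0 ≤ B)
    (hAmeas : Measurable A)
    (hAint : IntegrableOn A (Icc 0 T))
    (hAnonneg : ∀ t ∈ Icc (0 : ℝ) T, 0 ≤ A t)
    (hineq : ∀ᵐ t ∂(volume.restrict (Icc (0 : ℝ) T)),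
      (1 / 2) * D t + B * X t ^ 2 ≤ A t * X t) :
    ∀ t ∈ Icc (0 : ℝ) T,
      X t + B * ∫ τ in (0 : ℝ)..t, X τ ≤ X 0 + ∫ τ in (0 : ℝ)..t, A τ := by
  intro t ht
  apply le_of_forall_pos_le_add
  intro δ hδ
  have hden : (0:ℝ) < 1 + B * T := by positivity
  set ε : ℝ := (δ / (1 + B * T)) ^ 2 with hεdef
  have hε : 0 < ε := by positivity
  have hsq : Real.sqrt ε = δ / (1 + B * T) := by
    rw [hεdef, Real.sqrt_sq (by positivity)]
  have := key_eps T hT X A D hXcont hXnonneg hXder B hB hAint hAnonneg hineq ε hε t ht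
  rw [hsq, div_mul_cancel₀ _ hden.ne'] at this
  linarith
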